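/- Let R be a (not necessarily commutative) ring, let w be a central element of R, and let d, e, h ∈ R satisfy d² = 0, e² = 0, d·e + e·d = w, and d·h + h·d = 1. Then for every ℓ ≥ 1: (h·e)^ℓ·d − d·(h·e)^ℓ = −e·(h·e)^{ℓ−1} + w · Σ_{j=0}^{ℓ−1} (h·e)^{ℓ−1−j} · h · (h·e)^{j}. -/
import Mathlib


open Finset

/-- The commutator identity `(he)^ℓ d − d (he)^ℓ = −e(he)^{ℓ−1} + w Σ_{j<ℓ} (he)^{ℓ−1−j} h (he)^j`. -/
theorem commutator_he_pow_d
    {R : Type*} [Ring R] (w d e h : R)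
    (hw : ∀ x : R, w * x = x * w)
    (hd2 : d * d = 0) (he2 : e * e = 0)
    (hde : d * e + e * d = w)
    (hdh : d * h + h * d = 1) :
    ∀ ℓ : ℕ, 1 ≤ ℓ →
      (h * e) ^ ℓ * d - d * (h * e) ^ ℓ =
        -(e * (h * e) ^ (ℓ - 1)) +
          w * ∑ j ∈ Finset.range ℓ, (h * e) ^ (ℓ - 1 - j) * h * (h * e) ^ j := by
  have hed : e * d = w - d * e := eq_sub_of_add_eq' hde
  have hhd : h * d = 1 - d * h := eq_sub_of_add_eq' hdh
  have base1 : (h * e) * d - d * (h * e) = -e + w * h := by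
    calc h * e * d - d * (h * e)
        = h * (e * d) - d * (h * e) := by noncomm_ring
      _ = h * (w - d * e) - d * (h * e) := by rw [hed]
      _ = h * w - (h * d) * e - d * (h * e) := by noncomm_ring
      _ = h * w - (1 - d * h) * e - d * (h * e) := by rw [hhd]
      _ = h * w - e := by noncomm_ring
      _ = -e + w * h := by rw [← hw h]; noncomm_ring
  intro ℓ hℓ
  induction ℓ, hℓ using Nat.le_induction with
  | base =>
    simpa using base1
  | succ n hn ih =>
    have hTe : (h * e) * e = 0 := by rw [mul_assoc, he2, mul_zero]
    have key : (h*e)^(n+1) * d - d * (h*e)^(n+1)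
        = (h*e) * ((h*e)^n * d - d * (h*e)^n) + ((h*e)*d - d*(h*e)) * (h*e)^n := by
      rw [pow_succ' (h*e) n]; noncomm_ring
    rw [key, ih, base1]
    have hsum : ∑ j ∈ Finset.range (n+1), (h * e) ^ (n - j) * h * (h * e) ^ j
        = (h*e) * ∑ j ∈ Finset.range n, (h * e) ^ (n - 1 - j) * h * (h * e) ^ j
          + h * (h*e)^n := by
      rw [Finset.sum_range_succ, Nat.sub_self, pow_zero, one_mul, Finset.mul_sum]
      congr 1
      refine Finset.sum_congr rfl fun j hj => ?_
      have hjn : j < n := Finset.mem_range.mp hj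
      have : n - j = (n - 1 - j) + 1 := by omega
      rw [this, pow_succ' (h*e)]
      noncomm_ring
    simp only [Nat.add_sub_cancel] at *
    rw [hsum]
    rw [mul_add, mul_neg, ← mul_assoc (h*e) e, hTe, zero_mul, neg_zero, zero_add,
      ← mul_assoc (h*e) w, ← hw (h*e), mul_assoc w (h*e)]
    noncomm_ring
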